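/- For any matrix γ = [[a,b],[c,d]] in SL₂(ℤ), the Rademacher symbol Φ(γ) is an integer. -/

import Mathlib

/-- The sawtooth function ((x)). -/
noncomputable def saw (x : ℝ) : ℝ := if Int.fract x = 0 then 0 else Int.fract x - 1/2

/-- The Dedekind sum s(h,k). -/
noncomputable def dedekindSum (h k : ℤ) : ℝ :=
  ∑ μ ∈ Finset.Icc 1 k, saw ((h : ℝ) * μ / k) * saw ((μ : ℝ) / k)

/-- The Rademacher symbol Φ. -/
noncomputable def Rad (γ : Matrix (Fin 2) (Fin 2) ℤ) : ℝ :=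
  if γ 1 0 = 0 then (γ 0 1 : ℝ) / (γ 1 1 : ℝ)
  else ((γ 0 0 : ℝ) + (γ 1 1 : ℝ)) / (γ 1 0 : ℝ)
    - 12 * ((γ 1 0).sign : ℝ) * dedekindSum (γ 1 1) |γ 1 0|

open Finset

/-- T(h,k) = Σ_{μ=1}^{k-1} μ ⌊hμ/k⌋. -/
noncomputable def TT (h k : ℤ) : ℤ := ∑ μ ∈ Finset.Icc 1 (k-1), μ * (h*μ/k)

lemma Icc_insert_top (n : ℤ) (h : 0 ≤ n) : Finset.Icc (1:ℤ) (n+1) = insert (n+1) (Finset.Icc 1 n) := by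
  ext x; simp only [mem_Icc, mem_insert]; omega

lemma card_Icc_int (n : ℤ) (h : 0 ≤ n) : ((Finset.Icc (1:ℤ) n).card : ℤ) = n := by
  rw [Int.card_Icc]; omega

lemma gauss1 (n : ℤ) (hn : 0 ≤ n) : 2 * ∑ μ ∈ Finset.Icc (1:ℤ) n, μ = n*(n+1) := by
  lift n to ℕ using hn
  induction n with
  | zero => simp
  | succ N ih =>
    push_cast
    rw [Icc_insert_top N (by positivity), Finset.sum_insert (by simp)]
    push_cast at ih
    ring_nf
    ring_nf at ih
    linarith

lemma gauss2 (n : ℤ) (hn : 0 ≤ n) : 6 * ∑ μ ∈ Finset.Icc (1:ℤ) n, μ^2 = n*(n+1)*(2*n+1) := by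
  lift n to ℕ using hn
  induction n with
  | zero => simp
  | succ N ih =>
    push_cast
    rw [Icc_insert_top N (by positivity), Finset.sum_insert (by simp)]
    push_cast at ih
    ring_nf
    ring_nf at ih
    linarith

lemma neg_ediv (a b : ℤ) (hb : 0 < b) (hnd : ¬ b ∣ a) : (-a)/b = -(a/b) - 1 := by
  have h1 := Int.mul_ediv_add_emod a b
  have h2 : 0 ≤ a % b := Int.emod_nonneg a hb.ne'
  have h3 : a % b < b := Int.emod_lt_of_pos a hb
  have h4 : a % b ≠ 0 := by
    intro h; exact hnd (Int.dvd_of_emod_eq_zero h)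
  have : -a = (b - a % b) + b * (-(a/b) - 1) := by linarith
  rw [this, Int.add_mul_ediv_left _ _ hb.ne', Int.ediv_eq_zero_of_lt (by omega) (by omega)]
  ring

/-- Double sum of F(max ν ν') over a square. -/
lemma max_double_sum (F : ℤ → ℤ) (n : ℤ) (hn : 0 ≤ n) :
    ∑ ν ∈ Finset.Icc (1:ℤ) n, ∑ ν' ∈ Finset.Icc (1:ℤ) n, F (max ν ν')
      = ∑ m ∈ Finset.Icc (1:ℤ) n, (2*m-1) * F m := by
  lift n to ℕ using hn
  induction n with
  | zero => simp
  | succ N ih =>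
    push_cast
    push_cast at ih
    set n : ℤ := (N:ℤ) with hn'
    have hn : (0:ℤ) ≤ n := by positivity
    rw [Icc_insert_top n hn, Finset.sum_insert (by simp), Finset.sum_insert (by simp),
      Finset.sum_congr rfl (fun ν hν => Finset.sum_insert (s := Finset.Icc (1:ℤ) n)
        (a := n+1) (by simp))]
    simp only [Finset.sum_add_distrib]
    have e1 : ∀ ν' ∈ Finset.Icc (1:ℤ) n, F (max (n+1) ν') = F (n+1) := by
      intro ν' hν'; simp only [mem_Icc] at hν'; rw [max_eq_left (by omega)]
    have e2 : ∀ ν ∈ Finset.Icc (1:ℤ) n, F (max ν (n+1)) = F (n+1) := by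
      intro ν hν; simp only [mem_Icc] at hν; rw [max_eq_right (by omega)]
    rw [Finset.sum_congr rfl e1, Finset.sum_congr rfl e2, Finset.sum_const,
      ih, max_self, Finset.sum_insert (by simp)]
    simp only [nsmul_eq_mul]
    have hc := card_Icc_int n hn
    rw [hc]
    ring

lemma not_dvd_mul (h k μ : ℤ) (hcop : IsCoprime k h) (h1 : 1 ≤ μ) (h2 : μ ≤ k-1) :
    ¬ k ∣ h * μ := by
  intro hd
  have : k ∣ μ := hcop.dvd_of_dvd_mul_left hd
  have := Int.le_of_dvd (by omega) this
  omega

/-- The map μ ↦ hμ mod k permutes the sum. -/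
lemma emod_perm (h k : ℤ) (hk : 0 < k) (hcop : IsCoprime h k) (f : ℤ → ℤ) :
    ∑ μ ∈ Finset.Icc 1 (k-1), f (h*μ % k) = ∑ μ ∈ Finset.Icc 1 (k-1), f μ := by
  obtain ⟨u, v, huv⟩ := hcop
  have hmem : ∀ (c : ℤ), (∀ μ, 1 ≤ μ → μ ≤ k - 1 → ¬ k ∣ c * μ) →
      ∀ μ ∈ Finset.Icc (1:ℤ) (k-1), c * μ % k ∈ Finset.Icc (1:ℤ) (k-1) := by
    intro c hnd μ hμ
    simp only [mem_Icc] at hμ ⊢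
    have h0 : 0 ≤ c * μ % k := Int.emod_nonneg _ hk.ne'
    have h1 : c * μ % k < k := Int.emod_lt_of_pos _ hk
    have h2 : c * μ % k ≠ 0 := by
      intro hz
      exact hnd μ hμ.1 hμ.2 (Int.dvd_of_emod_eq_zero hz)
    omega
  have hndh : ∀ μ, 1 ≤ μ → μ ≤ k - 1 → ¬ k ∣ h * μ := by
    intro μ h1 h2 hd
    have hkμ : k ∣ u * (h * μ) := Dvd.dvd.mul_left hd u
    have : u * (h * μ) = μ - (v*μ) * k := by linear_combination μ * huv
    rw [this] at hkμ
    have : k ∣ μ := by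
      have h2' := dvd_add hkμ (Dvd.intro_left (v*μ) (rfl : v*μ*k = v*μ*k))
      simpa using h2'
    have := Int.le_of_dvd (by omega) this; omega
  have hndu : ∀ μ, 1 ≤ μ → μ ≤ k - 1 → ¬ k ∣ u * μ := by
    intro μ h1 h2 hd
    have hkμ : k ∣ h * (u * μ) := Dvd.dvd.mul_left hd h
    have : h * (u * μ) = μ - (v*μ) * k := by linear_combination μ * huv
    rw [this] at hkμ
    have : k ∣ μ := by
      have h2' := dvd_add hkμ (Dvd.intro_left (v*μ) (rfl : v*μ*k = v*μ*k))
      simpa using h2'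
    have := Int.le_of_dvd (by omega) this; omega
  refine Finset.sum_nbij' (fun μ => h * μ % k) (fun μ => u * μ % k)
    (hmem h hndh) (hmem u hndu) ?_ ?_ ?_
  · intro μ hμ
    simp only [mem_Icc] at hμ
    show u * (h * μ % k) % k = μ
    have : u * (h * μ % k) % k = u * (h * μ) % k := by
      conv_rhs => rw [Int.mul_emod]
      rw [Int.mul_emod u (h * μ % k) k, Int.emod_emod_of_dvd _ dvd_rfl]
    rw [this]
    have e : u * (h * μ) = μ + (v * μ) * (-k) := by linear_combination μ * huv
    rw [e]
    rw [show μ + v * μ * -k = μ + k * (-(v*μ)) by ring, Int.add_mul_emod_self_left]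
    exact Int.emod_eq_of_lt (by omega) (by omega)
  · intro μ hμ
    simp only [mem_Icc] at hμ
    show h * (u * μ % k) % k = μ
    have : h * (u * μ % k) % k = h * (u * μ) % k := by
      conv_rhs => rw [Int.mul_emod]
      rw [Int.mul_emod h (u * μ % k) k, Int.emod_emod_of_dvd _ dvd_rfl]
    rw [this]
    have e : h * (u * μ) = μ + (v * μ) * (-k) := by linear_combination μ * huv
    rw [e]
    rw [show μ + v * μ * -k = μ + k * (-(v*μ)) by ring, Int.add_mul_emod_self_left]
    exact Int.emod_eq_of_lt (by omega) (by omega)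
  · intro μ hμ; rfl

/-- Counting lattice points below the line. -/
lemma count_below (p q x : ℤ) (hp : 0 < p) (hq : 0 < q) (hx1 : 0 < x) (hx2 : x < q)
    (hnd : ¬ q ∣ p * x) :
    (Finset.Icc (1:ℤ) (p-1)).filter (fun ν => q * ν < p * x) = Finset.Icc (1:ℤ) (p*x/q) := by
  have hqle : p * x / q ≤ p - 1 := by
    have : p * x / q < p := by
      rw [Int.ediv_lt_iff_lt_mul hq]
      nlinarith
    omega
  ext ν
  simp only [Finset.mem_filter, mem_Icc]
  constructor
  · rintro ⟨⟨h1, h2⟩, h3⟩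
    refine ⟨h1, ?_⟩
    rw [Int.le_ediv_iff_mul_le hq]
    nlinarith [h3]
  · rintro ⟨h1, h2⟩
    have hle : ν * q ≤ p * x := (Int.le_ediv_iff_mul_le hq).mp h2
    have hne : ν * q ≠ p * x := by
      intro he; exact hnd ⟨ν, by linarith [he]⟩
    refine ⟨⟨h1, le_trans h2 hqle⟩, ?_⟩
    have h4 : q * ν ≤ p * x := by rw [mul_comm]; exact hle
    have h5 : q * ν ≠ p * x := by rw [mul_comm]; exact hne
    omega

/-- Counting lattice points above the line. -/
lemma count_above (p q m : ℤ) (hp : 0 < p) (hq : 0 < q) (hm1 : 0 < m) (hm2 : m < p)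
    (hnd : ¬ p ∣ q * m) :
    (((Finset.Icc (1:ℤ) (q-1)).filter (fun μ => q * m < p * μ)).card : ℤ)
      = (q - 1) - q * m / p := by
  have key := Finset.card_filter_add_card_filter_not
    (s := Finset.Icc (1:ℤ) (q-1)) (p := fun μ => q * m < p * μ)
  have hneg : (Finset.Icc (1:ℤ) (q-1)).filter (fun μ => ¬ q * m < p * μ)
      = Finset.Icc (1:ℤ) (q*m/p) := by
    have : (Finset.Icc (1:ℤ) (q-1)).filter (fun μ => ¬ q * m < p * μ)
        = (Finset.Icc (1:ℤ) (q-1)).filter (fun μ => p * μ < q * m) := by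
      apply Finset.filter_congr
      intro μ hμ
      simp only [mem_Icc] at hμ
      simp only [not_lt, eq_iff_iff]
      constructor
      · intro hle
        rcases lt_or_eq_of_le hle with h | h
        · exact h
        · exact absurd ⟨μ, h.symm⟩ hnd
      · exact le_of_lt
    rw [this]
    exact count_below q p m hq hp hm1 hm2 hnd
  have hcard : ((Finset.Icc (1:ℤ) (q-1)).card : ℤ) = q - 1 := card_Icc_int _ (by omega)
  have hcard2 : (((Finset.Icc (1:ℤ) (q-1)).filter (fun μ => ¬ q * m < p * μ)).card : ℤ)
      = q * m / p := by
    rw [hneg]; exact card_Icc_int _ (Int.ediv_nonneg (by positivity) (by omega))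
  have := congrArg (Nat.cast (R := ℤ)) key
  push_cast at this
  omega

/-- Reflection: sum of floors. -/
lemma floor_reflect (p q : ℤ) (hp : 0 < p) (hq : 0 < q) (hcop : IsCoprime p q) :
    2 * ∑ ν ∈ Finset.Icc (1:ℤ) (p-1), (q * ν / p) = (p-1) * (q-1) := by
  have hnd : ∀ ν, 1 ≤ ν → ν ≤ p - 1 → ¬ p ∣ q * ν := by
    intro ν h1 h2
    exact not_dvd_mul q p ν hcop h1 h2
  have hrev : ∑ ν ∈ Finset.Icc (1:ℤ) (p-1), (q * ν / p)
      = ∑ ν ∈ Finset.Icc (1:ℤ) (p-1), (q * (p - ν) / p) := by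
    refine Finset.sum_nbij' (fun ν => p - ν) (fun ν => p - ν) ?_ ?_ ?_ ?_ ?_
    · intro ν hν; simp only [mem_Icc] at hν ⊢; omega
    · intro ν hν; simp only [mem_Icc] at hν ⊢; omega
    · intro ν _; ring
    · intro ν _; ring
    · intro ν hν; rw [show p - (p - ν) = ν by ring]
  have hpt : ∀ ν ∈ Finset.Icc (1:ℤ) (p-1), q * ν / p + q * (p - ν) / p = q - 1 := by
    intro ν hν
    simp only [mem_Icc] at hν
    have e : q * (p - ν) = -(q * ν) + p * q := by ring
    rw [e, Int.add_mul_ediv_left _ _ hp.ne', neg_ediv _ _ hp (hnd ν hν.1 hν.2)]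
    ring
  have : 2 * ∑ ν ∈ Finset.Icc (1:ℤ) (p-1), (q * ν / p)
      = ∑ ν ∈ Finset.Icc (1:ℤ) (p-1), (q * ν / p + q * (p - ν) / p) := by
    rw [Finset.sum_add_distrib, ← hrev]; ring
  rw [this, Finset.sum_congr rfl hpt, Finset.sum_const, nsmul_eq_mul, card_Icc_int _ (by omega)]

/-- Identity I1: expansion of Σ (hμ mod k)² = Σ μ². -/
lemma identityI1 (h k : ℤ) (hk : 0 < k) (hcop : IsCoprime h k) :
    h^2 * (∑ μ ∈ Finset.Icc (1:ℤ) (k-1), μ^2) - 2*h*k*(TT h k)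
      + k^2 * (∑ μ ∈ Finset.Icc (1:ℤ) (k-1), (h*μ/k)^2)
      = ∑ μ ∈ Finset.Icc (1:ℤ) (k-1), μ^2 := by
  have hperm := emod_perm h k hk hcop (fun x => x^2)
  have hpt : ∀ μ ∈ Finset.Icc (1:ℤ) (k-1),
      (h*μ % k)^2 = h^2*μ^2 - 2*h*k*(μ*(h*μ/k)) + k^2*(h*μ/k)^2 := by
    intro μ _
    rw [Int.emod_def]
    ring
  rw [Finset.sum_congr rfl hpt] at hperm
  simp only [Finset.sum_add_distrib, Finset.sum_sub_distrib, ← Finset.mul_sum] at hperm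
  rw [TT]
  linarith [hperm]

/-- Identity I2: double counting. -/
lemma identityI2 (h k : ℤ) (hh : 0 < h) (hk : 0 < k) (hcop : IsCoprime h k) :
    2 * (∑ μ ∈ Finset.Icc (1:ℤ) (k-1), (h*μ/k)^2)
      = 2*(k-1)*(h-1)^2 - 4*(TT k h) + (h-1)*(k-1) := by
  have hndk : ∀ μ, 1 ≤ μ → μ ≤ k - 1 → ¬ k ∣ h * μ :=
    fun μ h1 h2 => not_dvd_mul h k μ hcop.symm h1 h2
  have hndh : ∀ m, 1 ≤ m → m ≤ h - 1 → ¬ h ∣ k * m :=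
    fun m h1 h2 => not_dvd_mul k h m hcop h1 h2
  -- Step 1: replace (hμ/k)² by the square of an indicator sum
  have step1 : ∀ μ ∈ Finset.Icc (1:ℤ) (k-1),
      (h*μ/k)^2 = (∑ ν ∈ Finset.Icc (1:ℤ) (h-1), if k*ν < h*μ then (1:ℤ) else 0)
        * (∑ ν ∈ Finset.Icc (1:ℤ) (h-1), if k*ν < h*μ then (1:ℤ) else 0) := by
    intro μ hμ
    simp only [mem_Icc] at hμ
    have hfil := count_below h k μ hh hk (by omega) (by omega) (hndk μ hμ.1 hμ.2)
    have hcard : ((((Finset.Icc (1:ℤ) (h-1)).filter (fun ν => k*ν < h*μ))).card : ℤ)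
        = h*μ/k := by
      rw [hfil]; exact card_Icc_int _ (Int.ediv_nonneg (mul_nonneg hh.le (by omega)) (by omega))
    rw [Finset.sum_boole, hcard]
    ring
  rw [Finset.sum_congr rfl step1]
  -- Step 2: expand into triple sum and swap
  have step2 : ∀ μ ∈ Finset.Icc (1:ℤ) (k-1),
      (∑ ν ∈ Finset.Icc (1:ℤ) (h-1), if k*ν < h*μ then (1:ℤ) else 0)
        * (∑ ν ∈ Finset.Icc (1:ℤ) (h-1), if k*ν < h*μ then (1:ℤ) else 0)
      = ∑ ν ∈ Finset.Icc (1:ℤ) (h-1), ∑ ν' ∈ Finset.Icc (1:ℤ) (h-1),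
          (if k * (max ν ν') < h*μ then (1:ℤ) else 0) := by
    intro μ hμ
    rw [Finset.sum_mul_sum]
    refine Finset.sum_congr rfl fun ν hν => Finset.sum_congr rfl fun ν' hν' => ?_
    have : k * max ν ν' < h*μ ↔ (k*ν < h*μ ∧ k*ν' < h*μ) := by
      rw [mul_max_of_nonneg _ _ hk.le, max_lt_iff]
    rw [if_congr this rfl rfl, ite_and]
    by_cases h1 : k*ν < h*μ <;> by_cases h2 : k*ν' < h*μ <;> simp [h1, h2]
  rw [Finset.sum_congr rfl step2, Finset.sum_comm]
  rw [Finset.sum_congr rfl (fun (ν:ℤ) _ => Finset.sum_comm)]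
  -- Step 3: inner sum over μ equals (k-1) - k·max/h
  have step3 : ∀ ν ∈ Finset.Icc (1:ℤ) (h-1), ∀ ν' ∈ Finset.Icc (1:ℤ) (h-1),
      (∑ μ ∈ Finset.Icc (1:ℤ) (k-1), if k * (max ν ν') < h*μ then (1:ℤ) else 0)
        = (k-1) - k * (max ν ν') / h := by
    intro ν hν ν' hν'
    simp only [mem_Icc] at hν hν'
    have hmax1 : 1 ≤ max ν ν' := le_max_of_le_left hν.1
    have hmax2 : max ν ν' ≤ h - 1 := max_le hν.2 hν'.2
    rw [Finset.sum_boole]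
    exact_mod_cast count_above h k (max ν ν') hh hk (by omega) (by omega)
      (hndh _ hmax1 hmax2)
  rw [Finset.sum_congr rfl (fun ν hν => Finset.sum_congr rfl (step3 ν hν))]
  -- Step 4: the max double sum
  rw [max_double_sum (fun m => (k-1) - k * m / h) (h-1) (by omega)]
  -- Step 5: compute
  have expand : ∀ m ∈ Finset.Icc (1:ℤ) (h-1),
      (2*m-1) * ((k-1) - k*m/h) = (2*m-1)*(k-1) - 2*(m*(k*m/h)) + k*m/h := by
    intro m _; ring
  rw [Finset.sum_congr rfl expand]
  simp only [Finset.sum_add_distrib, Finset.sum_sub_distrib, ← Finset.mul_sum]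
  have hG := floor_reflect h k hh hk hcop
  have hg1 := gauss1 (h-1) (by omega)
  have hcard : ((Finset.Icc (1:ℤ) (h-1)).card : ℤ) = h - 1 := card_Icc_int _ (by omega)
  have hlin : ∑ m ∈ Finset.Icc (1:ℤ) (h-1), (2*m-1) = (h-1)^2 := by
    have h2 : ∑ m ∈ Finset.Icc (1:ℤ) (h-1), (2*m) = 2 * ∑ m ∈ Finset.Icc (1:ℤ) (h-1), m :=
      (Finset.mul_sum _ _ _).symm
    simp only [Finset.sum_sub_distrib, Finset.sum_const, nsmul_eq_mul, mul_one]
    rw [h2, hcard]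
    linarith [hg1]
  have hTT : TT k h = ∑ m ∈ Finset.Icc (1:ℤ) (h-1), m*(k*m/h) := rfl
  rw [← Finset.sum_mul, hlin, hTT]
  linarith [hG]

/-- Reciprocity for the sums T. -/
lemma reciprocityT (h k : ℤ) (hh : 0 < h) (hk : 0 < k) (hcop : IsCoprime h k) :
    12*h*(TT h k) = 6*k*(k-1)*(h-1)^2 - 12*k*(TT k h) + 3*k*(h-1)*(k-1)
      + (h^2-1)*(k-1)*(2*k-1) := by
  have I1 := identityI1 h k hk hcop
  have I2 := identityI2 h k hh hk hcop
  have h6 := gauss2 (k-1) (by omega)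
  have h6' : 6 * (∑ μ ∈ Finset.Icc (1:ℤ) (k-1), μ^2) = (k-1)*k*(2*k-1) := by
    rw [h6]; ring
  apply mul_left_cancel₀ (hk.ne' : k ≠ 0)
  linear_combination (-6)*I1 + 3*k^2*I2 + (h^2-1)*h6'

/-- The key congruence: k ∣ 12·d·T(d,k) - d² + 1. -/
lemma key_congruence (d c : ℤ) (hc : 0 < c) (hcop : IsCoprime d c) :
    c ∣ 12*d*(TT d c) - d^2 + 1 := by
  rcases eq_or_lt_of_le (show (1:ℤ) ≤ c by omega) with h1 | h1
  · rw [← h1]; exact one_dvd _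
  -- c > 1 now
  set d' := d % c with hd'
  set q := d / c with hq
  have hdq : c * q + d' = d := Int.mul_ediv_add_emod d c
  have hd'0 : 0 ≤ d' := Int.emod_nonneg d hc.ne'
  have hd'c : d' < c := Int.emod_lt_of_pos d hc
  have hd'pos : 0 < d' := by
    rcases eq_or_lt_of_le hd'0 with h2 | h2
    · exfalso
      have hdvd : c ∣ d := Int.dvd_of_emod_eq_zero h2.symm
      have : IsUnit c := hcop.isUnit_of_dvd' hdvd dvd_rfl
      rw [Int.isUnit_iff] at this
      omega
    · exact h2
  have hcop' : IsCoprime d' c := by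
    have : d' = d + c * (-q) := by linear_combination hdq
    rw [this]
    exact hcop.add_mul_left_left (-q)
  -- T(d,c) = q·M + T(d',c)
  have hM6 := gauss2 (c-1) (by omega)
  set M := ∑ μ ∈ Finset.Icc (1:ℤ) (c-1), μ^2 with hM
  have hM6' : 6 * M = (c-1)*c*(2*c-1) := by rw [hM, hM6]; ring
  have hTshift : TT d c = q * M + TT d' c := by
    rw [TT, TT, hM, Finset.mul_sum, ← Finset.sum_add_distrib]
    refine Finset.sum_congr rfl fun μ hμ => ?_
    have : d * μ = d' * μ + c * (q * μ) := by linear_combination μ * hdq.symm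
    rw [this, Int.add_mul_ediv_left _ _ hc.ne']
    ring
  -- core: the congruence for d'
  have hcore : c ∣ 12*d'*(TT d' c) - d'^2 + 1 := by
    have R := reciprocityT d' c hd'pos hc hcop'
    refine ⟨6*(c-1)*(d'-1)^2 - 12*(TT c d') + 3*(d'-1)*(c-1) + (d'^2-1)*(2*c-3), ?_⟩
    linear_combination R
  -- transfer from d' to d
  obtain ⟨w, hw⟩ := hcore
  have main : c ∣ 12*(c*q+d')*(q*M + TT d' c) - (c*q+d')^2 + 1 := by
    refine ⟨w + 12*q^2*M + 12*q*(TT d' c) + 2*d'*q*(c-1)*(2*c-1) - c*q^2 - 2*q*d', ?_⟩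
    linear_combination hw + 2*d'*q*hM6'
  rwa [← hTshift, hdq] at main


/-- KEY divisibility: c² ∣ c(a+d) - 3S. -/
lemma key_dvd (a d c : ℤ) (hc : 0 < c) (hdvd : c ∣ a * d - 1) :
    ∃ n : ℤ, c*(a+d) - 3*(∑ μ ∈ Finset.Icc (1:ℤ) (c-1), (2*(d*μ%c) - c)*(2*μ - c))
      = c^2 * n := by
  obtain ⟨e, he⟩ := hdvd
  have hcop : IsCoprime d c := ⟨a, -e, by linarith [he]⟩
  set S := ∑ μ ∈ Finset.Icc (1:ℤ) (c-1), (2*(d*μ%c) - c)*(2*μ - c) with hS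
  set U := ∑ μ ∈ Finset.Icc (1:ℤ) (c-1), μ*(d*μ%c) with hU0
  set M := ∑ μ ∈ Finset.Icc (1:ℤ) (c-1), μ^2 with hM0
  have hg1 := gauss1 (c-1) (by omega)
  have hg1' : 2 * ∑ μ ∈ Finset.Icc (1:ℤ) (c-1), μ = (c-1)*c := by rw [hg1]; ring
  have h6 : 6 * M = (c-1)*c*(2*c-1) := by rw [hM0, gauss2 (c-1) (by omega)]; ring
  have hperm := emod_perm d c hc hcop id
  simp only [id] at hperm
  have hcard : ((Finset.Icc (1:ℤ) (c-1)).card : ℤ) = c - 1 := card_Icc_int _ (by omega)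
  -- S = 4U - c²(c-1)
  have hSU : S = 4*U - c^2*(c-1) := by
    rw [hS, hU0]
    have expand : ∀ μ ∈ Finset.Icc (1:ℤ) (c-1),
        (2*(d*μ%c) - c)*(2*μ - c) = 4*(μ*(d*μ%c)) - 2*c*(d*μ%c) - 2*c*μ + c^2 := by
      intro μ _; ring
    rw [Finset.sum_congr rfl expand]
    simp only [Finset.sum_add_distrib, Finset.sum_sub_distrib, ← Finset.mul_sum,
      Finset.sum_const, nsmul_eq_mul, hcard]
    rw [hperm]
    have hx : ∑ x ∈ Finset.Icc (1:ℤ) (c-1), 2*c*x = 2*c*∑ x ∈ Finset.Icc (1:ℤ) (c-1), x :=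
      (Finset.mul_sum _ _ _).symm
    have h2 : c * (2 * ∑ x ∈ Finset.Icc (1:ℤ) (c-1), x) = c * ((c-1)*c) := by rw [hg1']
    linarith [h2, hx]
  -- U = d·M - c·T
  have hUT : U = d*M - c*(TT d c) := by
    rw [hU0, hM0, TT, Finset.mul_sum, Finset.mul_sum, ← Finset.sum_sub_distrib]
    refine Finset.sum_congr rfl fun μ _ => ?_
    rw [Int.emod_def]
    ring
  -- K: c ∣ a - d + 12·T
  have hK : c ∣ a - d + 12*(TT d c) := by
    have hK' := key_congruence d c hc hcop
    have hd : c ∣ d * (a - d + 12*(TT d c)) := by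
      have : d * (a - d + 12*(TT d c)) = (12*d*(TT d c) - d^2 + 1) + (a*d - 1) := by ring
      rw [this]
      exact dvd_add hK' ⟨e, he⟩
    exact hcop.symm.dvd_of_dvd_mul_left hd
  obtain ⟨w, hw⟩ := hK
  exact ⟨w + 2*d*(3-2*c) + 3*(c-1),
    by linear_combination (-3)*hSU - 12*hUT - 2*d*h6 + c*hw⟩

lemma dedekind_glue (d c : ℤ) (hc : 0 < c) (hcop : IsCoprime d c) :
    (4*(c:ℝ)^2) * dedekindSum d c
      = ((∑ μ ∈ Finset.Icc (1:ℤ) (c-1), (2*(d*μ%c) - c)*(2*μ - c) : ℤ) : ℝ) := by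
  have hc0 : (c:ℝ) ≠ 0 := by exact_mod_cast hc.ne'
  have hcn : ((c.toNat : ℕ) : ℤ) = c := Int.toNat_of_nonneg hc.le
  have hcnR : ((c.toNat : ℕ) : ℝ) = (c : ℝ) := by exact_mod_cast congrArg (Int.cast : ℤ → ℝ) hcn
  have hfract : ∀ m : ℤ, Int.fract ((m:ℝ)/(c:ℝ)) = ((m % c : ℤ) : ℝ)/(c:ℝ) := by
    intro m
    have := Int.fract_div_intCast_eq_div_intCast_mod (k := ℝ) (m := m) (n := c.toNat)
    rwa [hcn, hcnR] at this
  rw [dedekindSum]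
  have hsplit : Finset.Icc (1:ℤ) c = insert c (Finset.Icc 1 (c-1)) := by
    have := Icc_insert_top (c-1) (by omega)
    rw [show c - 1 + 1 = c by ring] at this
    exact this
  rw [hsplit, Finset.sum_insert (by simp)]
  have htop : saw ((c:ℝ)/(c:ℝ)) = 0 := by
    rw [div_self hc0, saw, if_pos Int.fract_one]
  rw [htop, mul_zero, zero_add, Finset.mul_sum]
  push_cast
  refine Finset.sum_congr rfl fun μ hμ => ?_
  simp only [mem_Icc] at hμ
  have hnd : ¬ c ∣ d * μ := not_dvd_mul d c μ hcop.symm hμ.1 hμ.2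
  have hr0 : 0 ≤ d*μ % c := Int.emod_nonneg _ hc.ne'
  have hrne : d*μ % c ≠ 0 := fun hz => hnd (Int.dvd_of_emod_eq_zero hz)
  have hrc : d*μ % c < c := Int.emod_lt_of_pos _ hc
  have hsaw1 : saw ((d:ℝ) * (μ:ℝ) / (c:ℝ)) = ((d*μ % c : ℤ):ℝ)/(c:ℝ) - 1/2 := by
    have e : (d:ℝ) * (μ:ℝ) / (c:ℝ) = ((d*μ : ℤ):ℝ)/(c:ℝ) := by push_cast; ring
    rw [saw, e, hfract (d*μ), if_neg]
    apply div_ne_zero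
    · exact_mod_cast hrne
    · exact hc0
  have hμmod : μ % c = μ := Int.emod_eq_of_lt (by omega) (by omega)
  have hsaw2 : saw ((μ:ℝ) / (c:ℝ)) = (μ:ℝ)/(c:ℝ) - 1/2 := by
    have hne : Int.fract ((μ:ℝ)/(c:ℝ)) ≠ 0 := by
      rw [hfract μ, hμmod]
      apply div_ne_zero
      · exact_mod_cast (by omega : μ ≠ 0)
      · exact hc0
    rw [saw, if_neg hne, hfract μ, hμmod]
  rw [hsaw1, hsaw2]
  push_cast
  field_simp
  ring

/-- Main lemma for positive c. -/
lemma main_pos (a d c : ℤ) (hc : 0 < c) (hdvd : c ∣ a * d - 1) :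
    ∃ n : ℤ, ((a:ℝ)+(d:ℝ))/(c:ℝ) - 12 * dedekindSum d c = (n:ℝ) := by
  obtain ⟨e, he⟩ := hdvd
  have hcop : IsCoprime d c := ⟨a, -e, by linarith [he]⟩
  obtain ⟨n, hn⟩ := key_dvd a d c hc ⟨e, he⟩
  refine ⟨n, ?_⟩
  have hglue := dedekind_glue d c hc hcop
  have hc0 : (c:ℝ) ≠ 0 := by exact_mod_cast hc.ne'
  have hnR : (c:ℝ)*((a:ℝ)+(d:ℝ)) - 3*((∑ μ ∈ Finset.Icc (1:ℤ) (c-1),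
      (2*(d*μ%c) - c)*(2*μ - c) : ℤ) : ℝ) = (c:ℝ)^2*(n:ℝ) := by
    exact_mod_cast congrArg (Int.cast : ℤ → ℝ) hn
  apply mul_left_cancel₀ (show (c:ℝ)^2 ≠ 0 by positivity)
  have e1 : (c:ℝ)^2 * (((a:ℝ)+(d:ℝ))/(c:ℝ)) = (c:ℝ)*((a:ℝ)+(d:ℝ)) := by
    field_simp
  linear_combination e1 - 3*hglue + hnR

/-- For any γ ∈ SL₂(ℤ), the Rademacher symbol Φ(γ) is an integer. -/
theorem rademacher_symbol_is_integer (γ : Matrix (Fin 2) (Fin 2) ℤ)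
    (hγ : γ.det = 1) : ∃ n : ℤ, Rad γ = (n : ℝ) := by
  rw [Matrix.det_fin_two] at hγ
  set a := γ 0 0
  set b := γ 0 1
  set c := γ 1 0
  set d := γ 1 1
  rcases lt_trichotomy c 0 with hc | hc | hc
  · -- c < 0
    obtain ⟨n, hn⟩ := main_pos a d (-c) (by omega) ⟨-b, by linear_combination hγ⟩
    refine ⟨-n, ?_⟩
    rw [Rad, if_neg (by omega)]
    have hsign : (c.sign : ℝ) = -1 := by
      rw [Int.sign_eq_neg_one_of_neg hc]; norm_num
    have habs : |c| = -c := abs_of_neg hc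
    rw [hsign, habs]
    have hcast : ((-c : ℤ) : ℝ) = -(c:ℝ) := by push_cast; ring
    rw [hcast, div_neg] at hn
    push_cast
    ring_nf
    ring_nf at hn
    linarith [hn]
  · -- c = 0
    rw [Rad, if_pos hc]
    rw [hc, mul_zero] at hγ
    have had : a * d = 1 := by linarith [hγ]
    show ∃ n : ℤ, (b:ℝ)/(d:ℝ) = (n:ℝ)
    rcases Int.eq_one_or_neg_one_of_mul_eq_one' had with ⟨_, hd⟩ | ⟨_, hd⟩
    · exact ⟨b, by rw [hd]; norm_num⟩
    · exact ⟨-b, by rw [hd]; push_cast; rw [div_neg, div_one]⟩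
  · -- c > 0
    obtain ⟨n, hn⟩ := main_pos a d c hc ⟨b, by linear_combination hγ⟩
    refine ⟨n, ?_⟩
    rw [Rad, if_neg (by omega)]
    have hsign : (c.sign : ℝ) = 1 := by
      rw [Int.sign_eq_one_of_pos hc]; norm_num
    have habs : |c| = c := abs_of_pos hc
    rw [hsign, habs, mul_one]
    exact hn
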